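/- Let $K$ be a field and $A$ a finite subset of $\mathrm{SL}_2(K)$ such that, writing matrices with respect to a fixed basis, every $g \in A$ satisfies $g_{12} g_{21} \ne 0$. Then $|\mathrm{Tr}(A A^{-1})| \ge |A| / (2 \cdot |\{(g_{11}, g_{22}) : g \in A\}|)$. -/

import Mathlib

open Finset Pointwise Matrix

theorem stmt9 {K : Type*} [Field K] [DecidableEq K]
    [DecidableEq (Matrix.SpecialLinearGroup (Fin 2) K)]
    (A : Finset (Matrix.SpecialLinearGroup (Fin 2) K))
    (hA : ∀ g ∈ A, (g : Matrix (Fin 2) (Fin 2) K) 0 1 * (g : Matrix (Fin 2) (Fin 2) K) 1 0 ≠ 0) :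
    (((A * A⁻¹).image
        (fun g : Matrix.SpecialLinearGroup (Fin 2) K =>
          Matrix.trace (g : Matrix (Fin 2) (Fin 2) K))).card : ℝ)
      ≥ (A.card : ℝ) /
          (2 * ((A.image (fun g : Matrix.SpecialLinearGroup (Fin 2) K =>
            ((g : Matrix (Fin 2) (Fin 2) K) 0 0, (g : Matrix (Fin 2) (Fin 2) K) 1 1))).card : ℝ)) := by
  classical
  set f : Matrix.SpecialLinearGroup (Fin 2) K → K × K := fun g =>
    ((g : Matrix (Fin 2) (Fin 2) K) 0 0, (g : Matrix (Fin 2) (Fin 2) K) 1 1) with hf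
  set D := A.image f with hD
  set T := (A * A⁻¹).image
      (fun g : Matrix.SpecialLinearGroup (Fin 2) K =>
        Matrix.trace (g : Matrix (Fin 2) (Fin 2) K)) with hT
  rcases A.eq_empty_or_nonempty with h | hne
  · subst h
    simp [hD, hT]
  have hD_ne : D.Nonempty := hne.image f
  -- pick the (a maximal) fiber
  obtain ⟨p, hpD, hmax⟩ := D.exists_max_image
    (fun q => (A.filter (fun g => f g = q)).card) hD_ne
  set F := A.filter (fun g => f g = p) with hF
  have hFA : F ⊆ A := Finset.filter_subset _ _
  have hAD : A.card ≤ D.card * F.card := by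
    calc A.card = ∑ q ∈ D, (A.filter (fun g => f g = q)).card :=
          Finset.card_eq_sum_card_fiberwise (fun x hx => Finset.mem_image_of_mem f hx)
      _ ≤ ∑ _q ∈ D, F.card := Finset.sum_le_sum (fun q hq => hmax q hq)
      _ = D.card * F.card := by rw [Finset.sum_const, smul_eq_mul]
  have hF_ne : F.Nonempty := by
    rw [← Finset.card_pos]
    rcases Nat.eq_zero_or_pos F.card with h0 | h0
    · rw [h0, Nat.mul_zero] at hAD
      have := hne.card_pos
      omega
    · exact h0
  obtain ⟨g₀, hg₀F⟩ := hF_ne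
  have hg₀A : g₀ ∈ A := hFA hg₀F
  obtain ⟨a, ha⟩ : ∃ x, (g₀ : Matrix (Fin 2) (Fin 2) K) 0 0 = x := ⟨_, rfl⟩
  obtain ⟨b, hb⟩ : ∃ x, (g₀ : Matrix (Fin 2) (Fin 2) K) 0 1 = x := ⟨_, rfl⟩
  obtain ⟨c, hc'⟩ : ∃ x, (g₀ : Matrix (Fin 2) (Fin 2) K) 1 0 = x := ⟨_, rfl⟩
  obtain ⟨d, hd⟩ : ∃ x, (g₀ : Matrix (Fin 2) (Fin 2) K) 1 1 = x := ⟨_, rfl⟩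
  have hc : c ≠ 0 := by
    have := hA g₀ hg₀A
    rw [hb, hc'] at this
    exact right_ne_zero_of_mul this
  have hp : p = (a, d) := by
    have := (Finset.mem_filter.mp hg₀F).2
    rw [hf] at this
    rw [← this]
    simp only [ha, hd]
  -- entries of elements of F
  have hent : ∀ h ∈ F, (h : Matrix (Fin 2) (Fin 2) K) 0 0 = a ∧
      (h : Matrix (Fin 2) (Fin 2) K) 1 1 = d := by
    intro h hh
    have := (Finset.mem_filter.mp hh).2
    rw [hf, hp] at this
    exact ⟨congrArg Prod.fst this, congrArg Prod.snd this⟩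
  have hdet : ∀ h ∈ F, a * d - (h : Matrix (Fin 2) (Fin 2) K) 0 1 *
      (h : Matrix (Fin 2) (Fin 2) K) 1 0 = 1 := by
    intro h hh
    obtain ⟨h1, h2⟩ := hent h hh
    have := h.2
    rw [Matrix.det_fin_two] at this
    rw [← h1, ← h2]
    exact this
  set φ : Matrix.SpecialLinearGroup (Fin 2) K → K := fun h =>
    Matrix.trace (((g₀ * h⁻¹ : Matrix.SpecialLinearGroup (Fin 2) K)) :
      Matrix (Fin 2) (Fin 2) K) with hφdef
  have hφ : ∀ h ∈ F, φ h = 2 * (a * d) - b * (h : Matrix (Fin 2) (Fin 2) K) 1 0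
      - c * (h : Matrix (Fin 2) (Fin 2) K) 0 1 := by
    intro h hh
    obtain ⟨h1, h2⟩ := hent h hh
    rw [hφdef]
    simp only []
    simp [Matrix.SpecialLinearGroup.coe_mul, Matrix.SpecialLinearGroup.coe_inv,
      Matrix.adjugate_fin_two, Matrix.trace_fin_two, Matrix.mul_apply,
      Fin.sum_univ_two, h1, h2, ha, hb, hc', hd]
    ring
  have key : ∀ t ∈ F.image φ, (F.filter (fun h => φ h = t)).card ≤ 2 := by
    intro t _
    set P : Polynomial K := Polynomial.C c * Polynomial.X ^ 2 -
      Polynomial.C (2 * (a * d) - t) * Polynomial.X +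
      Polynomial.C (b * (a * d - 1)) with hP
    have hPd : P.natDegree ≤ 2 := by
      rw [hP]; compute_degree
    have hP0 : P ≠ 0 := by
      intro h0
      have h2 : P.coeff 2 = c := by
        rw [hP, Polynomial.coeff_add, Polynomial.coeff_sub, Polynomial.coeff_C_mul,
          Polynomial.coeff_C_mul, Polynomial.coeff_X_pow, Polynomial.coeff_C]
        norm_num [Polynomial.coeff_X]
      rw [h0] at h2
      simp at h2
      exact hc h2.symm
    have hsub : (F.filter (fun h => φ h = t)).card ≤ P.roots.toFinset.card := by
      refine Finset.card_le_card_of_injOn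
        (fun h => (h : Matrix (Fin 2) (Fin 2) K) 0 1) ?_ ?_
      · intro h hh
        obtain ⟨hhF, ht⟩ := Finset.mem_filter.mp hh
        rw [Finset.mem_coe, Multiset.mem_toFinset, Polynomial.mem_roots hP0]
        have hdh := hdet h hhF
        have hφh := hφ h hhF
        rw [ht] at hφh
        show P.eval _ = 0
        rw [hP]
        simp only [Polynomial.eval_add, Polynomial.eval_sub,
          Polynomial.eval_mul, Polynomial.eval_C, Polynomial.eval_X,
          Polynomial.eval_pow]
        rw [show a * d - 1 = (h : Matrix (Fin 2) (Fin 2) K) 0 1 *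
            (h : Matrix (Fin 2) (Fin 2) K) 1 0 by linear_combination hdh,
          show 2 * (a * d) - t = b * (h : Matrix (Fin 2) (Fin 2) K) 1 0 +
            c * (h : Matrix (Fin 2) (Fin 2) K) 0 1 by linear_combination -hφh]
        ring
      · intro h hh h' hh' he
        simp only [Finset.coe_filter, Set.mem_setOf_eq] at hh hh'
        obtain ⟨hhF, _⟩ := hh
        obtain ⟨hhF', _⟩ := hh'
        have hx0 : (h : Matrix (Fin 2) (Fin 2) K) 0 1 ≠ 0 :=
          left_ne_zero_of_mul (hA h (hFA hhF))
        have he' : (h : Matrix (Fin 2) (Fin 2) K) 0 1 =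
            (h' : Matrix (Fin 2) (Fin 2) K) 0 1 := he
        have e10 : (h : Matrix (Fin 2) (Fin 2) K) 1 0 =
            (h' : Matrix (Fin 2) (Fin 2) K) 1 0 := by
          have d1 := hdet h hhF
          have d2 := hdet h' hhF'
          rw [← he'] at d2
          have hz : (h : Matrix (Fin 2) (Fin 2) K) 0 1 *
              ((h : Matrix (Fin 2) (Fin 2) K) 1 0 -
               (h' : Matrix (Fin 2) (Fin 2) K) 1 0) = 0 := by
            linear_combination d2 - d1
          rcases mul_eq_zero.mp hz with h0 | h0
          · exact absurd h0 hx0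
          · linear_combination h0
        obtain ⟨e00, e11⟩ := hent h hhF
        obtain ⟨e00', e11'⟩ := hent h' hhF'
        apply Subtype.ext
        ext i j
        fin_cases i <;> fin_cases j
        · exact e00.trans e00'.symm
        · exact he'
        · exact e10
        · exact e11.trans e11'.symm
    calc (F.filter (fun h => φ h = t)).card ≤ P.roots.toFinset.card := hsub
      _ ≤ Multiset.card P.roots := Multiset.toFinset_card_le _
      _ ≤ P.natDegree := Polynomial.card_roots' P
      _ ≤ 2 := hPd
  have hF2 : F.card ≤ 2 * (F.image φ).card := Finset.card_le_mul_card_image F 2 key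
  have himg : F.image φ ⊆ T := by
    intro t ht
    obtain ⟨h, hh, rfl⟩ := Finset.mem_image.mp ht
    exact Finset.mem_image_of_mem _
      (Finset.mul_mem_mul hg₀A (Finset.inv_mem_inv (hFA hh)))
  have hfinal : A.card ≤ D.card * (2 * T.card) := by
    calc A.card ≤ D.card * F.card := hAD
      _ ≤ D.card * (2 * (F.image φ).card) := Nat.mul_le_mul_left _ hF2
      _ ≤ D.card * (2 * T.card) :=
          Nat.mul_le_mul_left _ (Nat.mul_le_mul_left _ (Finset.card_le_card himg))
  have hDpos : (0 : ℝ) < (D.card : ℝ) := by exact_mod_cast hD_ne.card_pos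
  have h2D : (0 : ℝ) < 2 * (D.card : ℝ) := by linarith
  rw [ge_iff_le, div_le_iff₀ h2D]
  have hcast : (A.card : ℝ) ≤ (D.card : ℝ) * (2 * (T.card : ℝ)) := by
    exact_mod_cast hfinal
  nlinarith [hcast]
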